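/- (Brenier's theorem, uniqueness of the map.) Let μ and ν be Borel probability measures on E with finite second moments, and assume μ is absolutely continuous with respect to Lebesgue measure. If u₁, u₂ : E → ℝ are convex functions and T₁, T₂ : E → E are Borel maps such that, for each i, u_i is differentiable at μ-a.e. x with gradient T_i(x) and the pushforward of μ under T_i equals ν, then T₁ = T₂ μ-almost everywhere. -/

import Mathlib

open MeasureTheory

noncomputable section

abbrev E (d : ℕ) := EuclideanSpace ℝ (Fin d)

open Set Filter Topology
open scoped RealInnerProductSpace

lemma lineDeriv' {d : ℕ} {u : E d → ℝ} {p x : E d} (h : HasGradientAt u p x) (v : E d) :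
    HasDerivAt (fun t : ℝ => u (x + t • v)) ⟪p, v⟫ 0 := by
  have hf := h.hasFDerivAt
  have hline : HasDerivAt (fun t : ℝ => x + t • v) v 0 := by
    simpa using ((hasDerivAt_id (0:ℝ)).smul_const v).const_add x
  have hf' : HasFDerivAt u ((InnerProductSpace.toDual ℝ (E d)) p) (x + (0:ℝ) • v) := by
    simpa using hf
  have h2 := HasFDerivAt.comp_hasDerivAt (f := fun t : ℝ => x + t • v) (0:ℝ) hf' hline
  simp only [InnerProductSpace.toDual_apply_apply, Function.comp_def] at h2
  exact h2

/-- slope comparison: derivative at 0 vs right slopes -/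
lemma deriv_le_of_slope {φ : ℝ → ℝ} {D c : ℝ} (hD : HasDerivAt φ D 0)
    (hb : ∀ᶠ t in 𝓝[>] (0:ℝ), (φ t - φ 0) / t ≤ c) : D ≤ c := by
  have h1 : Tendsto (slope φ 0) (𝓝[>] (0:ℝ)) (𝓝 D) :=
    (hasDerivAt_iff_tendsto_slope.mp hD).mono_left
      (nhdsWithin_mono _ (fun t ht => ne_of_gt ht))
  refine le_of_tendsto h1 ?_
  filter_upwards [hb] with t ht
  simpa [slope_def_field, div_eq_inv_mul] using ht

lemma le_deriv_of_slope {φ : ℝ → ℝ} {D c : ℝ} (hD : HasDerivAt φ D 0)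
    (hb : ∀ᶠ t in 𝓝[>] (0:ℝ), c ≤ (φ t - φ 0) / t) : c ≤ D := by
  have h1 : Tendsto (slope φ 0) (𝓝[>] (0:ℝ)) (𝓝 D) :=
    (hasDerivAt_iff_tendsto_slope.mp hD).mono_left
      (nhdsWithin_mono _ (fun t ht => ne_of_gt ht))
  refine ge_of_tendsto h1 ?_
  filter_upwards [hb] with t ht
  simpa [slope_def_field, div_eq_inv_mul] using ht

lemma grad_subgrad {d : ℕ} {u : E d → ℝ} (hu : ConvexOn ℝ Set.univ u) {p x : E d}
    (h : HasGradientAt u p x) (y : E d) : u x + ⟪p, y - x⟫ ≤ u y := by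
  have hD := lineDeriv' h (y - x)
  have key : ⟪p, y - x⟫ ≤ u y - u x := by
    refine deriv_le_of_slope hD ?_
    filter_upwards [Ioc_mem_nhdsGT (zero_lt_one)] with t ht
    have h0 : x + t • (y - x) = (1 - t) • x + t • y := by
      simp [smul_sub, sub_smul]; abel
    have hc := hu.2 (Set.mem_univ x) (Set.mem_univ y)
      (by linarith [ht.2] : (0:ℝ) ≤ 1 - t) (le_of_lt ht.1) (by ring)
    rw [smul_eq_mul, smul_eq_mul] at hc
    have hz : x + (0:ℝ) • (y - x) = x := by simp
    rw [hz, div_le_iff₀ ht.1]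
    calc u (x + t • (y - x)) - u x ≤ ((1-t) * u x + t * u y) - u x := by
          rw [h0]; simpa using hc
      _ = (u y - u x) * t := by ring
  linarith

lemma subgrad_unique {d : ℕ} {u : E d → ℝ} {p q x : E d}
    (h : HasGradientAt u p x) (hq : ∀ z, u x + ⟪q, z - x⟫ ≤ u z) : q = p := by
  have key : ∀ v : E d, ⟪q, v⟫ ≤ ⟪p, v⟫ := by
    intro v
    have hD := lineDeriv' h v
    refine le_deriv_of_slope hD ?_
    filter_upwards [self_mem_nhdsWithin] with t ht
    have := hq (x + t • v)
    have htpos : (0:ℝ) < t := ht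
    rw [le_div_iff₀ htpos]
    have hsim : ⟪q, x + t • v - x⟫ = t * ⟪q, v⟫ := by
      rw [add_sub_cancel_left, real_inner_smul_right]
    have hz : x + (0:ℝ) • v = x := by simp
    rw [hz]
    rw [hsim] at this
    linarith
  have : ∀ v : E d, ⟪q - p, v⟫ = 0 := by
    intro v
    have h1 := key v
    have h2 := key (-v)
    simp only [inner_neg_right] at h2
    have : ⟪q, v⟫ = ⟪p, v⟫ := le_antisymm h1 (by linarith)
    rw [inner_sub_left, this, sub_self]
  have := this (q - p)
  rwa [inner_self_eq_zero, sub_eq_zero] at this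

lemma grad_fy {d : ℕ} {u : E d → ℝ} (hu : ConvexOn ℝ Set.univ u) {p x : E d}
    (h : HasGradientAt u p x) (w : E d) : ⟪w, p⟫ - u w ≤ ⟪x, p⟫ - u x := by
  have := grad_subgrad hu h w
  rw [inner_sub_right] at this
  have h1 : ⟪p, w⟫ = ⟪w, p⟫ := real_inner_comm _ _
  have h2 : ⟪p, x⟫ = ⟪x, p⟫ := real_inner_comm _ _
  linarith [this, h1 ▸ this]

lemma brenier_key {d : ℕ} (μ : Measure (E d)) [IsProbabilityMeasure μ]
    (u : E d → ℝ) (T S : E d → E d)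
    (hu : ConvexOn ℝ Set.univ u)
    (hTm : Measurable T) (hSm : Measurable S)
    (hg : ∀ᵐ x ∂μ, HasGradientAt u (T x) x)
    (hmap : μ.map T = μ.map S)
    (hμ2 : Integrable (fun x : E d => ‖x‖ ^ 2) μ)
    (hT2 : Integrable (fun x : E d => ‖T x‖ ^ 2) μ)
    (hS2 : Integrable (fun x : E d => ‖S x‖ ^ 2) μ) :
    ∫ x, ⟪x, S x⟫ ∂μ ≤ ∫ x, ⟪x, T x⟫ ∂μ ∧
      (∫ x, ⟪x, S x⟫ ∂μ = ∫ x, ⟪x, T x⟫ ∂μ → S =ᵐ[μ] T) := by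
  -- continuity of u
  have hucont : Continuous u := by
    rw [← continuousOn_univ]
    exact hu.continuousOn isOpen_univ
  -- dense sequence
  obtain ⟨z, hz⟩ : ∃ z : ℕ → E d, DenseRange z :=
    ⟨TopologicalSpace.denseSeq (E d), TopologicalSpace.denseRange_denseSeq _⟩
  set F : ℕ → E d → ℝ := fun n y => ⟪z n, y⟫ - u (z n) with hF
  have hFm : ∀ n, Measurable (F n) := by
    intro n
    exact ((continuous_const.inner continuous_id).sub continuous_const).measurable
  set g : E d → ℝ := fun y => ⨆ n, F n y with hgdef
  have hgm : Measurable g := Measurable.iSup hFm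
  set B : Set (E d) := {y | BddAbove (Set.range fun n => F n y)} with hBdef
  have hBmeas : MeasurableSet B := measurableSet_bddAbove_range hFm
  -- pointwise facts
  have hsup : ∀ x y : E d, (∀ w, ⟪w, y⟫ - u w ≤ ⟪x, y⟫ - u x) →
      y ∈ B ∧ g y = ⟪x, y⟫ - u x := by
    intro x y hx
    have hBy : y ∈ B := ⟨⟪x, y⟫ - u x, by rintro _ ⟨n, rfl⟩; exact hx _⟩
    refine ⟨hBy, le_antisymm (ciSup_le fun n => hx _) ?_⟩
    refine le_of_forall_pos_le_add ?_
    intro ε hε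
    set s : Set (E d) := {w | ⟪x, y⟫ - u x - ε < ⟪w, y⟫ - u w} with hs
    have hsopen : IsOpen s := by
      apply isOpen_lt continuous_const
      exact (continuous_id.inner continuous_const).sub hucont
    have hsne : s.Nonempty := ⟨x, by simp [hs]; linarith⟩
    obtain ⟨n, hn⟩ := hz.exists_mem_open hsopen hsne
    have h1 : ⟪x, y⟫ - u x - ε < F n y := hn
    have h2 : F n y ≤ g y := le_ciSup hBy n
    linarith
  have hfenchel : ∀ y ∈ B, ∀ w, ⟪w, y⟫ - u w ≤ g y := by
    intro y hBy w
    have hcl : IsClosed {w : E d | ⟪w, y⟫ - u w ≤ g y} :=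
      isClosed_le ((continuous_id.inner continuous_const).sub hucont) continuous_const
    have hrange : Set.range z ⊆ {w : E d | ⟪w, y⟫ - u w ≤ g y} := by
      rintro _ ⟨n, rfl⟩
      exact le_ciSup hBy n
    have : closure (Set.range z) ⊆ {w : E d | ⟪w, y⟫ - u w ≤ g y} := by
      rw [← hcl.closure_eq]; exact closure_mono hrange
    exact this (hz w)
  -- integrability of norms
  have hnx : Integrable (fun x : E d => ‖x‖) μ := by
    refine Integrable.mono' ((integrable_const (1:ℝ)).add hμ2)
      continuous_norm.measurable.aestronglyMeasurable (ae_of_all _ fun x => ?_)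
    rw [norm_norm]
    simp only [Pi.add_apply]
    nlinarith [norm_nonneg x, sq_nonneg (‖x‖ - 1)]
  have hinner : ∀ (R : E d → E d), Measurable R → Integrable (fun x => ‖R x‖ ^ 2) μ →
      Integrable (fun x : E d => ⟪x, R x⟫) μ := by
    intro R hRm hR2
    refine Integrable.mono' (hμ2.add hR2)
      (measurable_id'.inner hRm).aestronglyMeasurable (ae_of_all _ fun x => ?_)
    rw [Real.norm_eq_abs]
    simp only [Pi.add_apply]
    nlinarith [abs_real_inner_le_norm x (R x), sq_nonneg (‖x‖ - ‖R x‖),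
      norm_nonneg x, norm_nonneg (R x), abs_nonneg (⟪x, R x⟫)]
  have hinnerT := hinner T hTm hT2
  have hinnerS := hinner S hSm hS2
  have hne : (ae μ).NeBot := ae_neBot.mpr (IsProbabilityMeasure.ne_zero (μ := μ))
  obtain ⟨x₀, hx₀⟩ := hg.exists
  have hu_int : Integrable u μ := by
    refine Integrable.mono'
      (?_ : Integrable (fun x : E d =>
        (|u 0| + |u x₀| + ‖T x₀‖ * ‖x₀‖) + ‖T x₀‖ * ‖x‖ + (‖x‖ ^ 2 + ‖T x‖ ^ 2)) μ)
      hucont.measurable.aestronglyMeasurable ?_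
    · exact ((integrable_const _).add (hnx.const_mul _)).add (hμ2.add hT2)
    · filter_upwards [hg] with x hx
      have hup : u x ≤ u 0 + ⟪x, T x⟫ := by
        have h1 := grad_subgrad hu hx 0
        rw [zero_sub, inner_neg_right] at h1
        have hc : ⟪T x, x⟫ = ⟪x, T x⟫ := real_inner_comm _ _
        linarith [hc ▸ h1]
      have hlow : u x₀ + ⟪T x₀, x - x₀⟫ ≤ u x := grad_subgrad hu hx₀ x
      rw [inner_sub_right] at hlow
      rw [Real.norm_eq_abs, abs_le]
      constructor
      · nlinarith [abs_real_inner_le_norm (T x₀) x, abs_real_inner_le_norm (T x₀) x₀,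
          le_abs_self (u x₀), neg_abs_le (u x₀), neg_abs_le (⟪T x₀, x⟫), neg_abs_le (⟪T x₀, x₀⟫),
          le_abs_self (⟪T x₀, x₀⟫), sq_nonneg (‖x‖ - ‖T x‖), norm_nonneg x, norm_nonneg (T x),
          abs_nonneg (u 0)]
      · nlinarith [abs_real_inner_le_norm x (T x), le_abs_self (u 0), le_abs_self (⟪x, T x⟫),
          sq_nonneg (‖x‖ - ‖T x‖), norm_nonneg x, norm_nonneg (T x), abs_nonneg (u x₀),
          mul_nonneg (norm_nonneg (T x₀)) (norm_nonneg x₀),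
          mul_nonneg (norm_nonneg (T x₀)) (norm_nonneg x)]
  -- a.e. identity for g ∘ T
  have hgradf : ∀ᵐ x ∂μ, T x ∈ B ∧ g (T x) = ⟪x, T x⟫ - u x := by
    filter_upwards [hg] with x hx
    exact hsup x (T x) (grad_fy hu hx)
  have hgT_int : Integrable (fun x => g (T x)) μ := by
    apply Integrable.congr (hinnerT.sub hu_int)
    filter_upwards [hgradf] with x hx using hx.2.symm
  have hgmapT : Integrable g (μ.map T) := by
    rw [integrable_map_measure hgm.aestronglyMeasurable hTm.aemeasurable]
    exact hgT_int
  have hgS_int : Integrable (fun x => g (S x)) μ := by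
    rw [hmap] at hgmapT
    exact (integrable_map_measure hgm.aestronglyMeasurable hSm.aemeasurable).mp hgmapT
  have hBT : ∀ᵐ y ∂(μ.map T), y ∈ B :=
    (MeasureTheory.ae_map_iff hTm.aemeasurable hBmeas).mpr
      (by filter_upwards [hgradf] with x hx using hx.1)
  have hBS : ∀ᵐ x ∂μ, S x ∈ B := by
    rw [hmap] at hBT
    exact (MeasureTheory.ae_map_iff hSm.aemeasurable hBmeas).mp hBT
  have hIS : ∫ x, g (S x) ∂μ = ∫ x, g (T x) ∂μ := by
    calc ∫ x, g (S x) ∂μ = ∫ y, g y ∂(μ.map S) :=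
          (integral_map hSm.aemeasurable hgm.aestronglyMeasurable).symm
      _ = ∫ y, g y ∂(μ.map T) := by rw [hmap]
      _ = ∫ x, g (T x) ∂μ := integral_map hTm.aemeasurable hgm.aestronglyMeasurable
  have hgT_eq : ∫ x, g (T x) ∂μ = ∫ x, ⟪x, T x⟫ ∂μ - ∫ x, u x ∂μ := by
    rw [← integral_sub hinnerT hu_int]
    apply integral_congr_ae
    filter_upwards [hgradf] with x hx using hx.2
  have hh_nonneg : ∀ᵐ x ∂μ, 0 ≤ u x + g (S x) - ⟪x, S x⟫ := by
    filter_upwards [hBS] with x hx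
    have := hfenchel (S x) hx x
    linarith
  have e1 : Integrable (fun x => u x + g (S x)) μ := hu_int.add hgS_int
  have hh_int : Integrable (fun x => u x + g (S x) - ⟪x, S x⟫) μ := e1.sub hinnerS
  have hIh : ∫ x, (u x + g (S x) - ⟪x, S x⟫) ∂μ
      = ∫ x, ⟪x, T x⟫ ∂μ - ∫ x, ⟪x, S x⟫ ∂μ := by
    rw [integral_sub e1 hinnerS, integral_add hu_int hgS_int, hIS, hgT_eq]
    ring
  constructor
  · have h0 : 0 ≤ ∫ x, (u x + g (S x) - ⟪x, S x⟫) ∂μ := integral_nonneg_of_ae hh_nonneg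
    rw [hIh] at h0
    linarith
  · intro heq
    have hzero : ∫ x, (u x + g (S x) - ⟪x, S x⟫) ∂μ = 0 := by rw [hIh, heq, sub_self]
    have hae0 : (fun x => u x + g (S x) - ⟪x, S x⟫) =ᵐ[μ] 0 :=
      (integral_eq_zero_iff_of_nonneg_ae hh_nonneg hh_int).mp hzero
    filter_upwards [hae0, hg, hBS] with x h0 hx hBx
    have h0' : u x + g (S x) - ⟪x, S x⟫ = 0 := h0
    have hsub : ∀ w, u x + ⟪S x, w - x⟫ ≤ u w := by
      intro w
      have h1 := hfenchel (S x) hBx w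
      rw [inner_sub_right]
      have hc1 : ⟪S x, w⟫ = ⟪w, S x⟫ := real_inner_comm _ _
      have hc2 : ⟪S x, x⟫ = ⟪x, S x⟫ := real_inner_comm _ _
      rw [hc1, hc2]
      linarith
    exact subgrad_unique hx hsub

theorem brenier_uniqueness {d : ℕ} (hd : 1 ≤ d)
    (μ ν : Measure (E d)) [IsProbabilityMeasure μ] [IsProbabilityMeasure ν]
    (hμ2 : Integrable (fun x : E d => ‖x‖ ^ 2) μ)
    (hν2 : Integrable (fun y : E d => ‖y‖ ^ 2) ν)
    (hac : μ ≪ (volume : Measure (E d)))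
    (u₁ u₂ : E d → ℝ) (T₁ T₂ : E d → E d)
    (hu₁ : ConvexOn ℝ Set.univ u₁) (hu₂ : ConvexOn ℝ Set.univ u₂)
    (hT₁m : Measurable T₁) (hT₂m : Measurable T₂)
    (hg₁ : ∀ᵐ x ∂μ, HasGradientAt u₁ (T₁ x) x)
    (hg₂ : ∀ᵐ x ∂μ, HasGradientAt u₂ (T₂ x) x)
    (hp₁ : μ.map T₁ = ν) (hp₂ : μ.map T₂ = ν) :
    T₁ =ᵐ[μ] T₂ := by
  have hnm : Measurable (fun y : E d => ‖y‖ ^ 2) := (continuous_norm.pow 2).measurable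
  have hT12 : Integrable (fun x => ‖T₁ x‖ ^ 2) μ := by
    have : Integrable (fun y : E d => ‖y‖ ^ 2) (μ.map T₁) := hp₁ ▸ hν2
    exact (integrable_map_measure hnm.aestronglyMeasurable hT₁m.aemeasurable).mp this
  have hT22 : Integrable (fun x => ‖T₂ x‖ ^ 2) μ := by
    have : Integrable (fun y : E d => ‖y‖ ^ 2) (μ.map T₂) := hp₂ ▸ hν2
    exact (integrable_map_measure hnm.aestronglyMeasurable hT₂m.aemeasurable).mp this
  have k1 := brenier_key μ u₁ T₁ T₂ hu₁ hT₁m hT₂m hg₁ (hp₁.trans hp₂.symm) hμ2 hT12 hT22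
  have k2 := brenier_key μ u₂ T₂ T₁ hu₂ hT₂m hT₁m hg₂ (hp₂.trans hp₁.symm) hμ2 hT22 hT12
  have heq : ∫ x, ⟪x, T₂ x⟫ ∂μ = ∫ x, ⟪x, T₁ x⟫ ∂μ := le_antisymm k1.1 k2.1
  exact (k1.2 heq).symm
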